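/- Multiplier norm dominates sup norm at level 2: if α > −1 and (m_k) is a bounded complex sequence such that for all polynomials f, ∫_0^∞ |∑_k m_k f̂_α(k) L_k^α(x) e^{−x/2}|² x^{α+1} dx ≤ A² ∫_0^∞ |f(x)e^{−x/2}|² x^{α+1} dx, then sup_k |m_k| ≤ C·A for a constant C depending only on α. -/

import Mathlib

open Finset MeasureTheory

/-- Finite difference sum. -/
noncomputable def Ffd (β : ℝ) (i j : ℕ) : ℝ :=
  ∑ l ∈ Finset.range (j + 1), (-1 : ℝ) ^ l * (j.choose l : ℝ) *
    ∏ t ∈ Finset.range i, (β + l + t + 1)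

lemma Ffd_zero_left (β : ℝ) (j : ℕ) : Ffd β 0 j = if j = 0 then 1 else 0 := by
  have := @Int.alternating_sum_range_choose j
  have h2 : ((∑ i ∈ range (j + 1), (-1 : ℤ) ^ i * ↑(j.choose i) : ℤ) : ℝ)
      = ((if j = 0 then 1 else 0 : ℤ) : ℝ) := by rw [this]
  push_cast at h2
  simpa [Ffd] using h2

lemma diff_sum (P : ℕ → ℝ) (j : ℕ) :
    ∑ l ∈ Finset.range (j + 1 + 1), (-1 : ℝ) ^ l * ((j + 1).choose l : ℝ) * P l
      = ∑ l ∈ Finset.range (j + 1), (-1 : ℝ) ^ l * (j.choose l : ℝ) * (P l - P (l + 1)) := by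
  have h2 : ∑ l ∈ range (j + 1), (-1 : ℝ) ^ (l + 1) * (j.choose (l + 1) : ℝ) * P (l + 1)
      = (∑ l ∈ range (j + 1), (-1 : ℝ) ^ l * (j.choose l : ℝ) * P l) - P 0 := by
    have b1 := Finset.sum_range_succ' (fun l => (-1 : ℝ) ^ l * (j.choose l : ℝ) * P l) (j + 1)
    have b2 := Finset.sum_range_succ (fun l => (-1 : ℝ) ^ l * (j.choose l : ℝ) * P l) (j + 1)
    simp only [Nat.choose_succ_self, Nat.cast_zero, Nat.choose_zero_right, Nat.cast_one,
      pow_zero, mul_zero, zero_mul, add_zero, one_mul] at b1 b2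
    linarith
  rw [Finset.sum_range_succ' (fun l => (-1 : ℝ) ^ l * (((j + 1).choose l : ℕ) : ℝ) * P l)]
  have split : ∑ l ∈ range (j + 1), (-1 : ℝ) ^ (l + 1) * (((j + 1).choose (l + 1) : ℕ) : ℝ) * P (l + 1)
      = (∑ l ∈ range (j + 1), -((-1 : ℝ) ^ l * (j.choose l : ℝ) * P (l + 1)))
        + ∑ l ∈ range (j + 1), (-1 : ℝ) ^ (l + 1) * (j.choose (l + 1) : ℝ) * P (l + 1) := by
    rw [← Finset.sum_add_distrib]
    refine Finset.sum_congr rfl fun l _ => ?_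
    rw [Nat.choose_succ_succ]; push_cast; ring
  rw [split, h2]
  have hr : ∑ l ∈ range (j + 1), (-1 : ℝ) ^ l * (j.choose l : ℝ) * (P l - P (l + 1))
      = (∑ l ∈ range (j + 1), (-1 : ℝ) ^ l * (j.choose l : ℝ) * P l)
        + ∑ l ∈ range (j + 1), -((-1 : ℝ) ^ l * (j.choose l : ℝ) * P (l + 1)) := by
    rw [← Finset.sum_add_distrib]
    exact Finset.sum_congr rfl fun l _ => by ring
  rw [hr]
  simp only [Nat.choose_zero_right, Nat.cast_one, pow_zero, one_mul]
  ring

lemma Ffd_succ (β : ℝ) (i j : ℕ) :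
    Ffd β (i + 1) (j + 1) = -((i : ℝ) + 1) * Ffd (β + 1) i j := by
  have key : ∀ l : ℕ, (∏ t ∈ Finset.range (i + 1), (β + l + t + 1))
      - (∏ t ∈ Finset.range (i + 1), (β + (l + 1 : ℕ) + t + 1))
      = -((i : ℝ) + 1) * ∏ t ∈ Finset.range i, ((β + 1) + l + t + 1) := by
    intro l
    have h1 : (∏ t ∈ Finset.range (i + 1), (β + l + t + 1))
        = (β + l + 1) * ∏ t ∈ Finset.range i, ((β + 1) + l + t + 1) := by
      rw [Finset.prod_range_succ']
      have e1 : ∀ t ∈ Finset.range i, (β + (l : ℝ) + ((t + 1 : ℕ) : ℝ) + 1)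
          = ((β + 1) + l + t + 1) := fun t _ => by push_cast; ring
      rw [Finset.prod_congr rfl e1]
      push_cast; ring
    have h2 : (∏ t ∈ Finset.range (i + 1), (β + (l + 1 : ℕ) + t + 1))
        = (∏ t ∈ Finset.range i, ((β + 1) + l + t + 1)) * ((β + 1) + l + i + 1) := by
      rw [Finset.prod_range_succ]
      have e2 : ∀ t ∈ Finset.range i, (β + ((l + 1 : ℕ) : ℝ) + (t : ℝ) + 1)
          = ((β + 1) + l + t + 1) := fun t _ => by push_cast; ring
      rw [Finset.prod_congr rfl e2]
      push_cast; ring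
    rw [h1, h2]; push_cast; ring
  have expand := diff_sum (fun l => ∏ t ∈ Finset.range (i + 1), (β + l + t + 1)) j
  show ∑ l ∈ Finset.range (j + 1 + 1), (-1 : ℝ) ^ l * ((j + 1).choose l : ℝ) *
      ∏ t ∈ Finset.range (i + 1), (β + l + t + 1) = _
  rw [expand]
  unfold Ffd
  rw [Finset.mul_sum]
  refine Finset.sum_congr rfl fun l _ => ?_
  rw [key l]; ring

lemma Ffd_eq_zero (β : ℝ) {i j : ℕ} (h : i < j) : Ffd β i j = 0 := by
  induction i generalizing β j with
  | zero => rw [Ffd_zero_left, if_neg (by omega)]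
  | succ i ih =>
    obtain ⟨j', rfl⟩ : ∃ j', j = j' + 1 := ⟨j - 1, by omega⟩
    rw [Ffd_succ, ih (β + 1) (by omega)]; ring

lemma Ffd_diag (β : ℝ) (j : ℕ) : Ffd β j j = (-1 : ℝ) ^ j * (j.factorial : ℝ) := by
  induction j generalizing β with
  | zero => simp [Ffd]
  | succ j ih =>
    rw [Ffd_succ, ih (β + 1)]
    push_cast [Nat.factorial_succ]
    ring
open Finset MeasureTheory

/-- The generalized Laguerre polynomial `L_n^α(x) = ∑_{j=0}^n binom(n+α, n−j) (−x)^j / j!`. -/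
noncomputable def laguerre (α : ℝ) (n : ℕ) (x : ℝ) : ℝ :=
  ∑ j ∈ Finset.range (n + 1),
    Real.Gamma ((n : ℝ) + α + 1) /
      (Real.Gamma (α + (j : ℝ) + 1) * ((n - j).factorial : ℝ)) * (-x) ^ j / (j.factorial : ℝ)

noncomputable def lagC (α : ℝ) (n j : ℕ) : ℝ :=
  Real.Gamma ((n : ℝ) + α + 1) /
    (Real.Gamma (α + (j : ℝ) + 1) * ((n - j).factorial : ℝ)) * (-1) ^ j / (j.factorial : ℝ)

lemma laguerre_eq (α : ℝ) (n : ℕ) (x : ℝ) :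
    laguerre α n x = ∑ j ∈ Finset.range (n + 1), lagC α n j * x ^ j := by
  unfold laguerre lagC
  refine Finset.sum_congr rfl fun j _ => ?_
  rw [neg_pow]; ring

lemma laguerre_zero (α : ℝ) (n : ℕ) :
    laguerre α n 0 = Real.Gamma ((n : ℝ) + α + 1) / (Real.Gamma (α + 1) * (n.factorial : ℝ)) := by
  rw [laguerre_eq]
  rw [Finset.sum_eq_single 0]
  · simp [lagC]
  · intro j _ hj
    rw [zero_pow hj, mul_zero]
  · intro h; exact absurd (Finset.mem_range.mpr (Nat.succ_pos n)) h

lemma Gamma_nat_shift {s : ℝ} (hs : 0 < s) (i : ℕ) :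
    Real.Gamma (s + i) = Real.Gamma s * ∏ t ∈ Finset.range i, (s + t) := by
  induction i with
  | zero => simp
  | succ i ih =>
    have h1 : s + ((i : ℕ) + 1 : ℕ) = (s + i) + 1 := by push_cast; ring
    rw [h1, Real.Gamma_add_one (by positivity), ih, Finset.prod_range_succ]
    ring

lemma integrableOn_rpow_exp {s : ℝ} (hs : -1 < s) :
    IntegrableOn (fun x : ℝ => x ^ s * Real.exp (-x)) (Set.Ioi 0) := by
  have h := Real.GammaIntegral_convergent (s := s + 1) (by linarith)
  have e : (fun x : ℝ => Real.exp (-x) * x ^ (s + 1 - 1)) = fun x : ℝ => x ^ s * Real.exp (-x) := by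
    funext x; rw [add_sub_cancel_right, mul_comm]
  rwa [e] at h

lemma integral_rpow_exp {s : ℝ} (hs : -1 < s) :
    ∫ x in Set.Ioi (0 : ℝ), x ^ s * Real.exp (-x) = Real.Gamma (s + 1) := by
  rw [Real.Gamma_eq_integral (by linarith : (0:ℝ) < s + 1)]
  refine setIntegral_congr_fun measurableSet_Ioi fun x _ => ?_
  rw [add_sub_cancel_right, mul_comm]

lemma lag_integrand_eq (α : ℝ) (i n : ℕ) {x : ℝ} (hx : x ∈ Set.Ioi (0:ℝ)) :
    x ^ i * laguerre α n x * x ^ α * Real.exp (-x)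
      = ∑ j ∈ Finset.range (n + 1), lagC α n j * (x ^ (α + i + j) * Real.exp (-x)) := by
  have hx0 : 0 < x := hx
  rw [laguerre_eq, Finset.mul_sum, Finset.sum_mul, Finset.sum_mul]
  refine Finset.sum_congr rfl fun j _ => ?_
  have hrw : x ^ (α + (i : ℕ) + (j : ℕ)) = x ^ α * x ^ (i : ℕ) * x ^ (j : ℕ) := by
    rw [← Real.rpow_natCast x i, ← Real.rpow_natCast x j, ← Real.rpow_add hx0,
      ← Real.rpow_add hx0]
  rw [hrw]; ring

lemma exp_arg_pos (α : ℝ) (hα : -1 < α) (i j : ℕ) : (-1 : ℝ) < α + i + j := by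
  have h1 : (0:ℝ) ≤ (i : ℝ) := Nat.cast_nonneg i
  have h2 : (0:ℝ) ≤ (j : ℝ) := Nat.cast_nonneg j
  linarith

lemma integrableOn_pow_laguerre {α : ℝ} (hα : -1 < α) (i n : ℕ) :
    IntegrableOn (fun x : ℝ => x ^ i * laguerre α n x * x ^ α * Real.exp (-x)) (Set.Ioi 0) := by
  have h : IntegrableOn (fun x : ℝ => ∑ j ∈ Finset.range (n + 1),
      lagC α n j * (x ^ (α + i + j) * Real.exp (-x))) (Set.Ioi 0) := by
    apply integrable_finset_sum
    intro j _
    exact (integrableOn_rpow_exp (exp_arg_pos α hα i j)).const_mul _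
  exact h.congr_fun (fun x hx => (lag_integrand_eq α i n hx).symm) measurableSet_Ioi

lemma integral_pow_laguerre {α : ℝ} (hα : -1 < α) (i n : ℕ) :
    ∫ x in Set.Ioi (0 : ℝ), x ^ i * laguerre α n x * x ^ α * Real.exp (-x)
      = Real.Gamma ((n : ℝ) + α + 1) / (n.factorial : ℝ) * Ffd α i n := by
  rw [setIntegral_congr_fun measurableSet_Ioi (fun x hx => lag_integrand_eq α i n hx)]
  rw [integral_finset_sum _
    (fun j _ => ((integrableOn_rpow_exp (exp_arg_pos α hα i j)).const_mul _))]
  unfold Ffd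
  rw [Finset.mul_sum]
  refine Finset.sum_congr rfl fun j hj => ?_
  rw [integral_const_mul, integral_rpow_exp (exp_arg_pos α hα i j)]
  have hj' : j ≤ n := by simpa [Nat.lt_succ_iff] using hj
  have hGpos : (0:ℝ) < α + j + 1 := by
    have : (0:ℝ) ≤ (j : ℝ) := Nat.cast_nonneg j
    linarith
  have hG : Real.Gamma (α + i + j + 1) = Real.Gamma (α + j + 1) * ∏ t ∈ Finset.range i, (α + j + t + 1) := by
    rw [show α + (i:ℝ) + j + 1 = (α + j + 1) + (i : ℕ) from by push_cast; ring,
      Gamma_nat_shift hGpos i]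
    congr 1
    exact Finset.prod_congr rfl fun t _ => by ring
  rw [hG]
  unfold lagC
  have hc : ((n.choose j : ℕ) : ℝ) * (j.factorial : ℝ) * ((n - j).factorial : ℝ)
      = (n.factorial : ℝ) := by
    exact_mod_cast congrArg (Nat.cast (R := ℝ)) (Nat.choose_mul_factorial_mul_factorial hj')
  have h1 : Real.Gamma (α + j + 1) ≠ 0 := (Real.Gamma_pos_of_pos hGpos).ne'
  have h2 : (j.factorial : ℝ) ≠ 0 := Nat.cast_ne_zero.mpr (Nat.factorial_ne_zero j)
  have h3 : ((n - j).factorial : ℝ) ≠ 0 := Nat.cast_ne_zero.mpr (Nat.factorial_ne_zero _)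
  have h4 : (n.factorial : ℝ) ≠ 0 := Nat.cast_ne_zero.mpr (Nat.factorial_ne_zero n)
  field_simp
  linear_combination (-(Real.Gamma ((n:ℝ) + α + 1) *
    (∏ t ∈ Finset.range i, (α + j + t + 1)))) * hc

/-- The Fourier–Laguerre coefficient `f̂_α(k) = ∫_0^∞ f(x) (L_k^α(x)/L_k^α(0)) x^α e^{−x} dx`. -/
noncomputable def lagCoeff (α : ℝ) (f : Polynomial ℝ) (k : ℕ) : ℝ :=
  ∫ x in Set.Ioi (0 : ℝ),
    f.eval x * (laguerre α k x / laguerre α k 0) * x ^ α * Real.exp (-x)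

lemma lag_mul_lag_eq (α : ℝ) (k n : ℕ) {x : ℝ} (hx : x ∈ Set.Ioi (0:ℝ)) :
    laguerre α k x * laguerre α n x * x ^ α * Real.exp (-x)
      = ∑ i ∈ Finset.range (k + 1),
          lagC α k i * (x ^ i * laguerre α n x * x ^ α * Real.exp (-x)) := by
  rw [laguerre_eq α k x, Finset.sum_mul, Finset.sum_mul, Finset.sum_mul]
  exact Finset.sum_congr rfl fun i _ => by ring

lemma integrableOn_lag_mul_lag {α : ℝ} (hα : -1 < α) (k n : ℕ) :
    IntegrableOn (fun x : ℝ => laguerre α k x * laguerre α n x * x ^ α * Real.exp (-x))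
      (Set.Ioi 0) := by
  have h : IntegrableOn (fun x : ℝ => ∑ i ∈ Finset.range (k + 1),
      lagC α k i * (x ^ i * laguerre α n x * x ^ α * Real.exp (-x))) (Set.Ioi 0) :=
    integrable_finset_sum _ fun i _ => (integrableOn_pow_laguerre hα i n).const_mul _
  exact h.congr_fun (fun x hx => (lag_mul_lag_eq α k n hx).symm) measurableSet_Ioi

lemma integral_lag_mul_lag_lt {α : ℝ} (hα : -1 < α) {k n : ℕ} (h : k < n) :
    ∫ x in Set.Ioi (0 : ℝ), laguerre α k x * laguerre α n x * x ^ α * Real.exp (-x) = 0 := by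
  rw [setIntegral_congr_fun measurableSet_Ioi (fun x hx => lag_mul_lag_eq α k n hx)]
  rw [integral_finset_sum _ (fun i _ => (integrableOn_pow_laguerre hα i n).const_mul _)]
  refine Finset.sum_eq_zero fun i hi => ?_
  rw [integral_const_mul, integral_pow_laguerre hα i n,
    Ffd_eq_zero α (lt_of_lt_of_le h (le_refl n) |> fun _ => by
      have : i ≤ k := Nat.lt_succ_iff.mp (Finset.mem_range.mp hi); omega)]
  ring

lemma integral_lag_mul_lag_ne {α : ℝ} (hα : -1 < α) {k n : ℕ} (h : k ≠ n) :
    ∫ x in Set.Ioi (0 : ℝ), laguerre α k x * laguerre α n x * x ^ α * Real.exp (-x) = 0 := by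
  rcases Nat.lt_or_ge k n with hlt | hge
  · exact integral_lag_mul_lag_lt hα hlt
  · have hlt : n < k := by omega
    rw [setIntegral_congr_fun measurableSet_Ioi
      (fun x _ => by ring :
        Set.EqOn (fun x : ℝ => laguerre α k x * laguerre α n x * x ^ α * Real.exp (-x))
          (fun x : ℝ => laguerre α n x * laguerre α k x * x ^ α * Real.exp (-x)) (Set.Ioi 0))]
    exact integral_lag_mul_lag_lt hα hlt

lemma integral_lag_mul_lag_diag {α : ℝ} (hα : -1 < α) (n : ℕ) :
    ∫ x in Set.Ioi (0 : ℝ), laguerre α n x * laguerre α n x * x ^ α * Real.exp (-x)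
      = Real.Gamma ((n : ℝ) + α + 1) / (n.factorial : ℝ) := by
  rw [setIntegral_congr_fun measurableSet_Ioi (fun x hx => lag_mul_lag_eq α n n hx)]
  rw [integral_finset_sum _ (fun i _ => (integrableOn_pow_laguerre hα i n).const_mul _)]
  rw [Finset.sum_eq_single n]
  · rw [integral_const_mul, integral_pow_laguerre hα n n, Ffd_diag]
    unfold lagC
    have h1 : Real.Gamma (α + (n : ℝ) + 1) ≠ 0 := by
      refine (Real.Gamma_pos_of_pos ?_).ne'
      have : (0:ℝ) ≤ (n : ℝ) := Nat.cast_nonneg n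
      linarith
    have h2 : (n.factorial : ℝ) ≠ 0 := Nat.cast_ne_zero.mpr (Nat.factorial_ne_zero n)
    have h3 : Real.Gamma ((n:ℝ) + α + 1) = Real.Gamma (α + (n:ℝ) + 1) := by
      congr 1; ring
    simp only [Nat.sub_self, Nat.factorial_zero, Nat.cast_one, mul_one]
    rw [h3]
    field_simp
    have : ((-1:ℝ)) ^ n * (-1:ℝ) ^ n = 1 := by
      rw [← pow_add, ← two_mul, pow_mul, neg_one_sq, one_pow]
    linear_combination this
  · intro i hi hne
    rw [integral_const_mul, integral_pow_laguerre hα i n,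
      Ffd_eq_zero α (by have := Nat.lt_succ_iff.mp (Finset.mem_range.mp hi); omega)]
    ring
  · intro h; exact absurd (Finset.mem_range.mpr (Nat.lt_succ_self n)) h

/-- The Laguerre polynomial as an element of `Polynomial ℝ`. -/
noncomputable def LagP (α : ℝ) (k : ℕ) : Polynomial ℝ :=
  ∑ j ∈ Finset.range (k + 1), Polynomial.C (lagC α k j) * Polynomial.X ^ j

lemma LagP_eval (α : ℝ) (k : ℕ) (x : ℝ) : (LagP α k).eval x = laguerre α k x := by
  rw [laguerre_eq]
  simp [LagP, Polynomial.eval_finset_sum]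

lemma laguerre_zero_pos {α : ℝ} (hα : -1 < α) (n : ℕ) : 0 < laguerre α n 0 := by
  rw [laguerre_zero]
  have h1 : (0:ℝ) < (n : ℝ) + α + 1 := by
    have : (0:ℝ) ≤ (n : ℝ) := Nat.cast_nonneg n
    linarith
  have := Real.Gamma_pos_of_pos h1
  have := Real.Gamma_pos_of_pos (show (0:ℝ) < α + 1 by linarith)
  have h2 : (0:ℝ) < (n.factorial : ℝ) := by
    exact_mod_cast Nat.factorial_pos n
  positivity

lemma lagCoeff_LagP {α : ℝ} (hα : -1 < α) (k n : ℕ) :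
    lagCoeff α (LagP α k) n = if n = k then Real.Gamma (α + 1) else 0 := by
  unfold lagCoeff
  have he : ∀ x : ℝ, (LagP α k).eval x * (laguerre α n x / laguerre α n 0) * x ^ α *
      Real.exp (-x)
      = (laguerre α n 0)⁻¹ * (laguerre α k x * laguerre α n x * x ^ α * Real.exp (-x)) := by
    intro x; rw [LagP_eval]; ring
  simp_rw [he]
  rw [integral_const_mul]
  by_cases hnk : n = k
  · subst hnk
    rw [integral_lag_mul_lag_diag hα n, laguerre_zero, if_pos rfl]
    have h1 : (0:ℝ) < (n : ℝ) + α + 1 := by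
      have : (0:ℝ) ≤ (n : ℝ) := Nat.cast_nonneg n
      linarith
    have hg1 : Real.Gamma ((n:ℝ) + α + 1) ≠ 0 := (Real.Gamma_pos_of_pos h1).ne'
    have hg2 : Real.Gamma (α + 1) ≠ 0 :=
      (Real.Gamma_pos_of_pos (show (0:ℝ) < α + 1 by linarith)).ne'
    have h2 : (n.factorial : ℝ) ≠ 0 := Nat.cast_ne_zero.mpr (Nat.factorial_ne_zero n)
    field_simp
  · rw [integral_lag_mul_lag_ne hα (Ne.symm hnk), if_neg hnk, mul_zero]

theorem multiplier_norm_dominates_sup (α : ℝ) (hα : -1 < α) :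
    ∃ C : ℝ, 0 < C ∧ ∀ (m : ℕ → ℂ), (∃ M : ℝ, ∀ k, ‖m k‖ ≤ M) →
      ∀ A : ℝ, 0 ≤ A →
      (∀ f : Polynomial ℝ,
        (∫ x in Set.Ioi (0 : ℝ),
            ‖∑' k : ℕ, m k * (lagCoeff α f k : ℂ) * (laguerre α k x : ℂ) *
              (Real.exp (-x / 2) : ℂ)‖ ^ 2 * x ^ (α + 1))
          ≤ A ^ 2 * ∫ x in Set.Ioi (0 : ℝ),
              |f.eval x * Real.exp (-x / 2)| ^ 2 * x ^ (α + 1)) →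
      ∀ k : ℕ, ‖m k‖ ≤ C * A := by
  have hΓpos : 0 < Real.Gamma (α + 1) := Real.Gamma_pos_of_pos (by linarith)
  refine ⟨(Real.Gamma (α + 1))⁻¹, inv_pos.mpr hΓpos, ?_⟩
  intro m _ A hA h k
  have h1 := h (LagP α k)
  -- evaluate the tsum
  have hts : ∀ x : ℝ, (∑' n : ℕ, m n * (lagCoeff α (LagP α k) n : ℂ) * (laguerre α n x : ℂ) *
      (Real.exp (-x / 2) : ℂ))
      = m k * (Real.Gamma (α + 1) : ℂ) * (laguerre α k x : ℂ) * (Real.exp (-x / 2) : ℂ) := by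
    intro x
    rw [tsum_eq_single k]
    · rw [lagCoeff_LagP hα k k, if_pos rfl]
    · intro n hn
      rw [lagCoeff_LagP hα k n, if_neg hn]
      simp
  have hnorm : ∀ x : ℝ, ‖m k * (Real.Gamma (α + 1) : ℂ) * (laguerre α k x : ℂ) *
      (Real.exp (-x / 2) : ℂ)‖ ^ 2
      = (‖m k‖ ^ 2 * Real.Gamma (α + 1) ^ 2) *
        |laguerre α k x * Real.exp (-x / 2)| ^ 2 := by
    intro x
    rw [norm_mul, norm_mul, norm_mul, Complex.norm_real, Complex.norm_real, Complex.norm_real,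
      Real.norm_eq_abs, Real.norm_eq_abs, Real.norm_eq_abs, abs_mul, abs_of_pos hΓpos]
    ring
  have hLHS : (∫ x in Set.Ioi (0 : ℝ),
      ‖∑' n : ℕ, m n * (lagCoeff α (LagP α k) n : ℂ) * (laguerre α n x : ℂ) *
        (Real.exp (-x / 2) : ℂ)‖ ^ 2 * x ^ (α + 1))
      = (‖m k‖ ^ 2 * Real.Gamma (α + 1) ^ 2) *
        ∫ x in Set.Ioi (0 : ℝ), |laguerre α k x * Real.exp (-x / 2)| ^ 2 * x ^ (α + 1) := by
    rw [← integral_const_mul]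
    refine setIntegral_congr_fun measurableSet_Ioi fun x _ => ?_
    rw [hts x, hnorm x, mul_assoc]
  have hRHS : (∫ x in Set.Ioi (0 : ℝ),
      |(LagP α k).eval x * Real.exp (-x / 2)| ^ 2 * x ^ (α + 1))
      = ∫ x in Set.Ioi (0 : ℝ), |laguerre α k x * Real.exp (-x / 2)| ^ 2 * x ^ (α + 1) := by
    refine setIntegral_congr_fun measurableSet_Ioi fun x _ => ?_
    rw [LagP_eval]
  rw [hLHS, hRHS] at h1
  set g : ℝ → ℝ := fun x => |laguerre α k x * Real.exp (-x / 2)| ^ 2 * x ^ (α + 1) with hg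
  -- integrability of g on Ioi 0
  have hEq : Set.EqOn (fun x : ℝ => ∑ i ∈ Finset.range (k + 1),
      lagC α k i * (x ^ (i + 1) * laguerre α k x * x ^ α * Real.exp (-x))) g (Set.Ioi 0) := by
    intro x hx
    have hx0 : (0 : ℝ) < x := hx
    show (∑ i ∈ Finset.range (k + 1),
        lagC α k i * (x ^ (i + 1) * laguerre α k x * x ^ α * Real.exp (-x))) = g x
    have step1 : (∑ i ∈ Finset.range (k + 1),
        lagC α k i * (x ^ (i + 1) * laguerre α k x * x ^ α * Real.exp (-x)))
        = (∑ i ∈ Finset.range (k + 1), lagC α k i * x ^ i) *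
          (laguerre α k x * (x ^ α * x) * Real.exp (-x)) := by
      rw [Finset.sum_mul]
      exact Finset.sum_congr rfl fun i _ => by rw [pow_succ]; ring
    rw [step1, ← laguerre_eq]
    show _ = |laguerre α k x * Real.exp (-x / 2)| ^ 2 * x ^ (α + 1)
    rw [sq_abs, Real.rpow_add_one hx0.ne']
    have hexp : Real.exp (-x / 2) * Real.exp (-x / 2) = Real.exp (-x) := by
      rw [← Real.exp_add]; ring_nf
    linear_combination (-(laguerre α k x ^ 2 * (x ^ α * x))) * hexp
  have hsumInt : IntegrableOn (fun x : ℝ => ∑ i ∈ Finset.range (k + 1),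
      lagC α k i * (x ^ (i + 1) * laguerre α k x * x ^ α * Real.exp (-x))) (Set.Ioi 0) :=
    integrable_finset_sum _ fun i _ => ((integrableOn_pow_laguerre hα (i + 1) k).const_mul _)
  have hInt : IntegrableOn g (Set.Ioi 0) := hsumInt.congr_fun hEq measurableSet_Ioi
  -- positivity of the integral
  have hJpos : 0 < ∫ x in Set.Ioi (0 : ℝ), g x := by
    rw [setIntegral_pos_iff_support_of_nonneg_ae ?_ hInt]
    · have hPne : LagP α k ≠ 0 := by
        intro hzero
        have hev := LagP_eval α k 0
        rw [hzero] at hev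
        simp only [Polynomial.eval_zero] at hev
        exact (laguerre_zero_pos hα k).ne' hev.symm
      have hfin := Polynomial.finite_setOf_isRoot hPne
      have hsub : Set.Ioi (0:ℝ) \ {x | (LagP α k).IsRoot x} ⊆
          Function.support g ∩ Set.Ioi 0 := by
        rintro x ⟨hx, hroot⟩
        refine ⟨?_, hx⟩
        have hL0 : laguerre α k x ≠ 0 := by
          rw [← LagP_eval α k x]
          exact hroot
        have hgt : 0 < g x := by
          apply mul_pos
          · have : laguerre α k x * Real.exp (-x / 2) ≠ 0 :=
              mul_ne_zero hL0 (Real.exp_ne_zero _)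
            positivity
          · exact Real.rpow_pos_of_pos hx _
        exact hgt.ne'
      refine lt_of_lt_of_le ?_ (measure_mono hsub)
      rw [measure_diff_null (hfin.measure_zero _)]
      simp [Real.volume_Ioi]
    · filter_upwards [self_mem_ae_restrict measurableSet_Ioi] with x hx
      have hx0 : (0:ℝ) < x := hx
      have := Real.rpow_pos_of_pos hx0 (α + 1)
      show (0:ℝ) ≤ g x
      positivity
  -- conclude
  have h2 : ‖m k‖ ^ 2 * Real.Gamma (α + 1) ^ 2 ≤ A ^ 2 :=
    le_of_mul_le_mul_right h1 hJpos
  have h3 : ‖m k‖ * Real.Gamma (α + 1) ≤ A := by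
    nlinarith [norm_nonneg (m k), hΓpos, hA, h2]
  rw [inv_mul_eq_div, le_div_iff₀ hΓpos]
  exact h3
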